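/- Let C be a right Hopf-Galois co-object over a Hopf algebra H with antipode S and cotranslation map τ. Then Σ τ(b⊗c₁) S(τ(c₃⊗c₂)) = S(τ(c⊗b)) for all b,c ∈ C. -/

import Mathlib

open Coalgebra TensorProduct

universe u v w

/-- The canonical map `C ⊗ H → C ⊗ C`, `c ⊗ h ↦ Σ c₁ ⊗ c₂·h`, for a right action
`act` of `H` on `C`. -/
noncomputable def canMap {F : Type u} {C : Type v} {H : Type w} [Field F]
    [AddCommGroup C] [Module F C] [Coalgebra F C] [AddCommGroup H] [Module F H]
    (act : C →ₗ[F] H →ₗ[F] C) : C ⊗[F] H →ₗ[F] C ⊗[F] C :=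
  (LinearMap.lTensor C (TensorProduct.lift act)) ∘ₗ
    (TensorProduct.assoc F C C H).toLinearMap ∘ₗ
    (LinearMap.rTensor H (comul (R := F)))

/-- The cotranslation map `τ = (ε ⊗ id) ∘ can⁻¹ : C ⊗ C → H`, where `inv` is the
inverse of the canonical map. -/
noncomputable def cotr {F : Type u} {C : Type v} {H : Type w} [Field F]
    [AddCommGroup C] [Module F C] [Coalgebra F C] [AddCommGroup H] [Module F H]
    (inv : C ⊗[F] C →ₗ[F] C ⊗[F] H) : C ⊗[F] C →ₗ[F] H :=
  (TensorProduct.lid F H).toLinearMap ∘ₗ (LinearMap.rTensor H (counit (R := F))) ∘ₗ inv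

set_option linter.unusedSectionVars false
set_option maxHeartbeats 1000000

namespace HGCaux
variable {F : Type u} [Field F]

lemma sum_swap4 {M : Type*} [AddCommMonoid M] {α β : Type*} {γ : α → Type*} {δ : β → Type*}
    (sα : Finset α) (sβ : Finset β) (sγ : ∀ a, Finset (γ a)) (sδ : ∀ b, Finset (δ b))
    (f : ∀ a, γ a → ∀ b, δ b → M) :
    ∑ a ∈ sα, ∑ c ∈ sγ a, ∑ b ∈ sβ, ∑ d ∈ sδ b, f a c b d
    = ∑ b ∈ sβ, ∑ d ∈ sδ b, ∑ a ∈ sα, ∑ c ∈ sγ a, f a c b d := by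
  calc ∑ a ∈ sα, ∑ c ∈ sγ a, ∑ b ∈ sβ, ∑ d ∈ sδ b, f a c b d
      = ∑ a ∈ sα, ∑ b ∈ sβ, ∑ c ∈ sγ a, ∑ d ∈ sδ b, f a c b d :=
        Finset.sum_congr rfl fun a _ => Finset.sum_comm
    _ = ∑ b ∈ sβ, ∑ a ∈ sα, ∑ c ∈ sγ a, ∑ d ∈ sδ b, f a c b d := Finset.sum_comm
    _ = ∑ b ∈ sβ, ∑ a ∈ sα, ∑ d ∈ sδ b, ∑ c ∈ sγ a, f a c b d :=
        Finset.sum_congr rfl fun b _ => Finset.sum_congr rfl fun a _ => Finset.sum_comm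
    _ = ∑ b ∈ sβ, ∑ d ∈ sδ b, ∑ a ∈ sα, ∑ c ∈ sγ a, f a c b d :=
        Finset.sum_congr rfl fun b _ => Finset.sum_comm

section tools
variable {A : Type*} [AddCommGroup A] [Module F A] [Coalgebra F A]
  {M : Type*} [AddCommGroup M] [Module F M]

lemma sum_counit_smul (φ : A →ₗ[F] M) {a : A} {ι : Type*} (r : Coalgebra.Repr F a ι) :
    ∑ i ∈ r.index, counit (R := F) (r.left i) • φ (r.right i) = φ a := by
  have h := Coalgebra.sum_counit_tmul_eq (R := F) r
  apply_fun (φ ∘ₗ (TensorProduct.lid F A).toLinearMap) at h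
  simpa [map_sum, -Coalgebra.sum_counit_tmul_eq] using h

lemma sum_smul_counit (φ : A →ₗ[F] M) {a : A} {ι : Type*} (r : Coalgebra.Repr F a ι) :
    ∑ i ∈ r.index, counit (R := F) (r.right i) • φ (r.left i) = φ a := by
  have h := Coalgebra.sum_tmul_counit_eq (R := F) r
  apply_fun (φ ∘ₗ (TensorProduct.rid F A).toLinearMap) at h
  simpa [map_sum, -Coalgebra.sum_tmul_counit_eq] using h

lemma sum_repr_assoc (Ψ : A ⊗[F] (A ⊗[F] A) →ₗ[F] M) {a : A} {ι : Type*} (r : Coalgebra.Repr F a ι)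
    {κ : ι → Type*} (r1 : ∀ i : r.ι, Coalgebra.Repr F (r.left i) (κ i))
    {Λ : ι → Type*} (r2 : ∀ i : r.ι, Coalgebra.Repr F (r.right i) (Λ i)) :
    ∑ i ∈ r.index, ∑ j ∈ (r1 i).index,
      Ψ ((r1 i).left j ⊗ₜ[F] ((r1 i).right j ⊗ₜ[F] r.right i))
    = ∑ i ∈ r.index, ∑ j ∈ (r2 i).index,
      Ψ (r.left i ⊗ₜ[F] ((r2 i).left j ⊗ₜ[F] (r2 i).right j)) := by
  have h := Coalgebra.sum_tmul_tmul_eq (R := F) r r1 r2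
  apply_fun Ψ at h
  simpa [map_sum, -Coalgebra.sum_tmul_tmul_eq] using h

lemma cancel_comp {M N P : Type*} [AddCommGroup M] [AddCommGroup N] [AddCommGroup P]
    [Module F M] [Module F N] [Module F P]
    {X : N →ₗ[F] M} {Y : M →ₗ[F] N} (h : X ∘ₗ Y = LinearMap.id) (Z : P →ₗ[F] M) :
    X ∘ₗ (Y ∘ₗ Z) = Z := by
  rw [← LinearMap.comp_assoc, h, LinearMap.id_comp]

end tools

section hopf
variable {H : Type w} [Ring H] [HopfAlgebra F H]

local notation "S" => HopfAlgebra.antipode (R := F) (A := H)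

noncomputable def mulRepr {x y : H} {ι ι' : Type*} (rx : Coalgebra.Repr F x ι) (ry : Coalgebra.Repr F y ι') :
    Coalgebra.Repr F (x * y) (ι × ι') where
  index := rx.index ×ˢ ry.index
  left p := rx.left p.1 * ry.left p.2
  right p := rx.right p.1 * ry.right p.2
  eq := by
    rw [Finset.sum_product]
    rw [show comul (R := F) (x * y) = comul x * comul y from Bialgebra.comul_mul x y,
      ← rx.eq, ← ry.eq, Finset.sum_mul_sum]
    simp [Algebra.TensorProduct.tmul_mul_tmul]

noncomputable def mul₃ : H ⊗[F] (H ⊗[F] H) →ₗ[F] H :=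
  LinearMap.mul' F H ∘ₗ LinearMap.lTensor H (LinearMap.mul' F H)

@[simp] lemma mul₃_tmul (a b c : H) :
    (mul₃ : H ⊗[F] (H ⊗[F] H) →ₗ[F] H) (a ⊗ₜ (b ⊗ₜ c)) = a * (b * c) := by
  simp [mul₃]

lemma sum_mul_antipode_mul {z : H} {ι : Type*} (r : Coalgebra.Repr F z ι) (c : H) :
    ∑ q ∈ r.index, r.left q * (S (r.right q) * c) = counit (R := F) z • c := by
  simp only [← mul_assoc, ← Finset.sum_mul, HopfAlgebra.sum_mul_antipode_eq_smul r,
    smul_mul_assoc, one_mul]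

noncomputable def mul₃rev : H ⊗[F] (H ⊗[F] H) →ₗ[F] H :=
  mul₃ ∘ₗ (LinearMap.lTensor H (TensorProduct.comm F H H).toLinearMap) ∘ₗ
    (TensorProduct.comm F (H ⊗[F] H) H).toLinearMap ∘ₗ
    (TensorProduct.assoc F H H H).symm.toLinearMap

@[simp] lemma mul₃rev_tmul (a b c : H) :
    (mul₃rev : H ⊗[F] (H ⊗[F] H) →ₗ[F] H) (a ⊗ₜ (b ⊗ₜ c)) = c * (b * a) := by
  simp [mul₃rev]

theorem antipode_mul (x y : H) : S (x * y) = S y * S x := by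
  obtain ⟨rx⟩ : Nonempty (Coalgebra.Repr F x (H × H)) := ⟨ℛ F x⟩
  obtain ⟨ry⟩ : Nonempty (Coalgebra.Repr F y (H × H)) := ⟨ℛ F y⟩
  let rx1 : ∀ i : rx.ι, Coalgebra.Repr F (rx.left i) (H × H) := fun i => ℛ F (rx.left i)
  let rx2 : ∀ i : rx.ι, Coalgebra.Repr F (rx.right i) (H × H) := fun i => ℛ F (rx.right i)
  let ry1 : ∀ i : ry.ι, Coalgebra.Repr F (ry.left i) (H × H) := fun i => ℛ F (ry.left i)
  let ry2 : ∀ i : ry.ι, Coalgebra.Repr F (ry.right i) (H × H) := fun i => ℛ F (ry.right i)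
  -- Way 1 : the big sum, with both variables right-nested, equals S (x*y)
  have way1 :
      ∑ i ∈ rx.index, ∑ p ∈ (rx2 i).index, ∑ j ∈ ry.index, ∑ q ∈ (ry2 j).index,
        S (rx.left i * ry.left j) *
          (((rx2 i).left p * (ry2 j).left q) *
            (S ((ry2 j).right q) * S ((rx2 i).right p))) = S (x * y) := by
    have step1 : ∀ (i : rx.ι) (p : (rx2 i).ι) (j : ry.ι),
        (∑ q ∈ (ry2 j).index,
          S (rx.left i * ry.left j) *
            (((rx2 i).left p * (ry2 j).left q) *
              (S ((ry2 j).right q) * S ((rx2 i).right p))))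
        = counit (R := F) (ry.right j) •
            (S (rx.left i * ry.left j) * ((rx2 i).left p * S ((rx2 i).right p))) := by
      intro i p j
      simp only [mul_assoc]
      rw [← Finset.mul_sum, ← Finset.mul_sum, sum_mul_antipode_mul (ry2 j)]
      simp [mul_smul_comm]
    calc
      ∑ i ∈ rx.index, ∑ p ∈ (rx2 i).index, ∑ j ∈ ry.index, ∑ q ∈ (ry2 j).index,
        S (rx.left i * ry.left j) *
          (((rx2 i).left p * (ry2 j).left q) *
            (S ((ry2 j).right q) * S ((rx2 i).right p)))
        = ∑ i ∈ rx.index, ∑ p ∈ (rx2 i).index, ∑ j ∈ ry.index,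
            counit (R := F) (ry.right j) •
              ((S ∘ₗ LinearMap.mulLeft F (rx.left i))
                  (ry.left j) * ((rx2 i).left p * S ((rx2 i).right p))) := by
          exact Finset.sum_congr rfl fun i _ => Finset.sum_congr rfl fun p _ =>
            Finset.sum_congr rfl fun j _ => step1 i p j
      _ = ∑ i ∈ rx.index, ∑ p ∈ (rx2 i).index,
            S (rx.left i * y) * ((rx2 i).left p * S ((rx2 i).right p)) := by
          refine Finset.sum_congr rfl fun i _ => Finset.sum_congr rfl fun p _ => ?_
          have := sum_smul_counit (F := F)
            (φ := LinearMap.mulRight F ((rx2 i).left p * S ((rx2 i).right p)) ∘ₗ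
              (S ∘ₗ LinearMap.mulLeft F (rx.left i))) ry
          simpa [mul_assoc] using this
      _ = ∑ i ∈ rx.index, counit (R := F) (rx.right i) • S (rx.left i * y) := by
          refine Finset.sum_congr rfl fun i _ => ?_
          rw [← Finset.mul_sum, HopfAlgebra.sum_mul_antipode_eq_smul (rx2 i)]
          simp [mul_smul_comm]
      _ = S (x * y) := by
          have := sum_smul_counit (F := F) (φ := S ∘ₗ LinearMap.mulRight F y) rx
          simpa using this
  -- transport y from right-nested to left-nested
  have trans_y : ∀ (i : rx.ι) (p : (rx2 i).ι),
      ∑ j ∈ ry.index, ∑ q ∈ (ry1 j).index,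
        S (rx.left i * (ry1 j).left q) *
          (((rx2 i).left p * (ry1 j).right q) *
            (S (ry.right j) * S ((rx2 i).right p)))
      = ∑ j ∈ ry.index, ∑ q ∈ (ry2 j).index,
        S (rx.left i * ry.left j) *
          (((rx2 i).left p * (ry2 j).left q) *
            (S ((ry2 j).right q) * S ((rx2 i).right p))) := by
    intro i p
    have := sum_repr_assoc (F := F)
      (Ψ := mul₃ ∘ₗ TensorProduct.map (S ∘ₗ LinearMap.mulLeft F (rx.left i))
        (TensorProduct.map (LinearMap.mulLeft F ((rx2 i).left p))
          (LinearMap.mulRight F (S ((rx2 i).right p)) ∘ₗ S))) ry ry1 ry2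
    simpa [mul_assoc] using this
  -- transport x from right-nested to left-nested (with y left-nested)
  have trans_x : ∀ (j : ry.ι) (q : (ry1 j).ι),
      ∑ i ∈ rx.index, ∑ p ∈ (rx1 i).index,
        S ((rx1 i).left p * (ry1 j).left q) *
          (((rx1 i).right p * (ry1 j).right q) *
            (S (ry.right j) * S (rx.right i)))
      = ∑ i ∈ rx.index, ∑ p ∈ (rx2 i).index,
        S (rx.left i * (ry1 j).left q) *
          (((rx2 i).left p * (ry1 j).right q) *
            (S (ry.right j) * S ((rx2 i).right p))) := by
    intro j q
    have := sum_repr_assoc (F := F)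
      (Ψ := mul₃ ∘ₗ TensorProduct.map (S ∘ₗ LinearMap.mulRight F ((ry1 j).left q))
        (TensorProduct.map (LinearMap.mulRight F ((ry1 j).right q))
          (LinearMap.mulLeft F (S (ry.right j)) ∘ₗ S))) rx rx1 rx2
    simpa [mul_assoc] using this
  -- Way 2 : the big sum with both variables left-nested equals S y * S x
  have way2 :
      ∑ i ∈ rx.index, ∑ j ∈ ry.index, ∑ p ∈ (rx1 i).index, ∑ q ∈ (ry1 j).index,
        S ((rx1 i).left p * (ry1 j).left q) *
          (((rx1 i).right p * (ry1 j).right q) *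
            (S (ry.right j) * S (rx.right i))) = S y * S x := by
    have inner : ∀ (i : rx.ι) (j : ry.ι),
        ∑ p ∈ (rx1 i).index, ∑ q ∈ (ry1 j).index,
          S ((rx1 i).left p * (ry1 j).left q) *
            (((rx1 i).right p * (ry1 j).right q) *
              (S (ry.right j) * S (rx.right i)))
        = counit (R := F) (rx.left i) •
            (counit (R := F) (ry.left j) • (S (ry.right j) * S (rx.right i))) := by
      intro i j
      have base : ∑ p ∈ (rx1 i).index, ∑ q ∈ (ry1 j).index,
          S ((rx1 i).left p * (ry1 j).left q) * ((rx1 i).right p * (ry1 j).right q)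
          = counit (R := F) (rx.left i * ry.left j) • 1 := by
        have h := HopfAlgebra.sum_antipode_mul_eq_smul (R := F) (mulRepr (rx1 i) (ry1 j))
        rw [← Finset.sum_product']
        exact h
      simp only [← mul_assoc] at base ⊢
      simp only [← Finset.sum_mul]
      rw [base]
      simp [smul_mul_assoc, Bialgebra.counit_mul, mul_smul, mul_assoc]
    calc ∑ i ∈ rx.index, ∑ j ∈ ry.index, ∑ p ∈ (rx1 i).index, ∑ q ∈ (ry1 j).index,
          S ((rx1 i).left p * (ry1 j).left q) *
            (((rx1 i).right p * (ry1 j).right q) *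
              (S (ry.right j) * S (rx.right i)))
        = ∑ i ∈ rx.index, ∑ j ∈ ry.index, counit (R := F) (rx.left i) •
            (counit (R := F) (ry.left j) • (S (ry.right j) * S (rx.right i))) :=
          Finset.sum_congr rfl fun i _ => Finset.sum_congr rfl fun j _ => inner i j
      _ = ∑ i ∈ rx.index, counit (R := F) (rx.left i) •
            ((LinearMap.mulLeft F (S y) ∘ₗ S) (rx.right i)) := by
          refine Finset.sum_congr rfl fun i _ => ?_
          rw [← Finset.smul_sum]
          congr 1
          have := sum_counit_smul (F := F)
            (φ := LinearMap.mulRight F (S (rx.right i)) ∘ₗ S) ry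
          simpa using this
      _ = S y * S x := by
          have := sum_counit_smul (F := F) (φ := LinearMap.mulLeft F (S y) ∘ₗ S) rx
          simpa using this
  -- assemble
  calc S (x * y)
      = ∑ i ∈ rx.index, ∑ p ∈ (rx2 i).index, ∑ j ∈ ry.index, ∑ q ∈ (ry2 j).index,
        S (rx.left i * ry.left j) *
          (((rx2 i).left p * (ry2 j).left q) *
            (S ((ry2 j).right q) * S ((rx2 i).right p))) := way1.symm
    _ = ∑ i ∈ rx.index, ∑ p ∈ (rx2 i).index, ∑ j ∈ ry.index, ∑ q ∈ (ry1 j).index,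
        S (rx.left i * (ry1 j).left q) *
          (((rx2 i).left p * (ry1 j).right q) *
            (S (ry.right j) * S ((rx2 i).right p))) :=
        (Finset.sum_congr rfl fun i _ => Finset.sum_congr rfl fun p _ => trans_y i p).symm
    _ = ∑ j ∈ ry.index, ∑ q ∈ (ry1 j).index, ∑ i ∈ rx.index, ∑ p ∈ (rx2 i).index,
        S (rx.left i * (ry1 j).left q) *
          (((rx2 i).left p * (ry1 j).right q) *
            (S (ry.right j) * S ((rx2 i).right p))) :=
        sum_swap4 _ _ _ _ _
    _ = ∑ j ∈ ry.index, ∑ q ∈ (ry1 j).index, ∑ i ∈ rx.index, ∑ p ∈ (rx1 i).index,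
        S ((rx1 i).left p * (ry1 j).left q) *
          (((rx1 i).right p * (ry1 j).right q) *
            (S (ry.right j) * S (rx.right i))) :=
        (Finset.sum_congr rfl fun j _ => Finset.sum_congr rfl fun q _ => trans_x j q).symm
    _ = ∑ i ∈ rx.index, ∑ p ∈ (rx1 i).index, ∑ j ∈ ry.index, ∑ q ∈ (ry1 j).index,
        S ((rx1 i).left p * (ry1 j).left q) *
          (((rx1 i).right p * (ry1 j).right q) *
            (S (ry.right j) * S (rx.right i))) :=
        sum_swap4 _ _ _ _ _
    _ = ∑ i ∈ rx.index, ∑ j ∈ ry.index, ∑ p ∈ (rx1 i).index, ∑ q ∈ (ry1 j).index,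
        S ((rx1 i).left p * (ry1 j).left q) *
          (((rx1 i).right p * (ry1 j).right q) *
            (S (ry.right j) * S (rx.right i))) :=
        Finset.sum_congr rfl fun i _ => Finset.sum_comm
    _ = S y * S x := way2

end hopf

section galois
variable {C : Type v} {H : Type w} [AddCommGroup C] [Module F C] [Coalgebra F C]
  [AddCommGroup H] [Module F H]

lemma can_tmul (act : C →ₗ[F] H →ₗ[F] C) (c : C) (h : H) {ι : Type*} (r : Coalgebra.Repr F c ι) :
    canMap act (c ⊗ₜ[F] h) = ∑ i ∈ r.index, r.left i ⊗ₜ[F] act (r.right i) h := by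
  simp only [canMap, LinearMap.comp_apply, LinearMap.rTensor_tmul, ← r.eq,
    TensorProduct.sum_tmul, map_sum, LinearEquiv.coe_coe, TensorProduct.assoc_tmul,
    LinearMap.lTensor_tmul, TensorProduct.lift.tmul]

lemma can_colinear (act : C →ₗ[F] H →ₗ[F] C) :
    (TensorProduct.assoc F C C C).toLinearMap ∘ₗ
      (LinearMap.rTensor C (comul (R := F))) ∘ₗ canMap act
    = (LinearMap.lTensor C (canMap act)) ∘ₗ (TensorProduct.assoc F C C H).toLinearMap ∘ₗ
      (LinearMap.rTensor H (comul (R := F))) := by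
  apply TensorProduct.ext'
  intro c h
  have r : Coalgebra.Repr F c (C × C) := ℛ F c
  have r1 : ∀ i : r.ι, Coalgebra.Repr F (r.left i) (C × C) := fun i => ℛ F (r.left i)
  have r2 : ∀ i : r.ι, Coalgebra.Repr F (r.right i) (C × C) := fun i => ℛ F (r.right i)
  have lhs : (TensorProduct.assoc F C C C).toLinearMap
      ((LinearMap.rTensor C (comul (R := F))) (canMap act (c ⊗ₜ[F] h)))
      = ∑ i ∈ r.index, ∑ j ∈ (r1 i).index,
          (r1 i).left j ⊗ₜ[F] ((r1 i).right j ⊗ₜ[F] act (r.right i) h) := by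
    rw [can_tmul act c h r]
    simp only [map_sum, LinearMap.rTensor_tmul]
    refine Finset.sum_congr rfl fun i _ => ?_
    rw [← (r1 i).eq]
    simp [TensorProduct.sum_tmul, map_sum]
  have rhs : (LinearMap.lTensor C (canMap act))
      ((TensorProduct.assoc F C C H).toLinearMap
        ((LinearMap.rTensor H (comul (R := F))) (c ⊗ₜ[F] h)))
      = ∑ i ∈ r.index, ∑ j ∈ (r2 i).index,
          r.left i ⊗ₜ[F] ((r2 i).left j ⊗ₜ[F] act ((r2 i).right j) h) := by
    simp only [LinearMap.rTensor_tmul, ← r.eq, TensorProduct.sum_tmul, map_sum,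
      LinearEquiv.coe_coe, TensorProduct.assoc_tmul, LinearMap.lTensor_tmul]
    refine Finset.sum_congr rfl fun i _ => ?_
    rw [can_tmul act _ h (r2 i), TensorProduct.tmul_sum]
  rw [LinearMap.comp_apply, LinearMap.comp_apply, lhs, LinearMap.comp_apply,
    LinearMap.comp_apply, rhs]
  have := Coalgebra.sum_map_tmul_tmul_eq (R := F)
    (f := (LinearMap.id : C →ₗ[F] C)) (g := (LinearMap.id : C →ₗ[F] C))
    (h := act.flip h) (a := c) (repr := r) (a₁ := r1) (a₂ := r2)
  simpa using this.symm

lemma strip_BH :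
    (LinearMap.lTensor C ((TensorProduct.lid F H).toLinearMap ∘ₗ
        (LinearMap.rTensor H (counit (R := F))))) ∘ₗ
      (TensorProduct.assoc F C C H).toLinearMap ∘ₗ
        (LinearMap.rTensor H (comul (R := F)))
    = (LinearMap.id : C ⊗[F] H →ₗ[F] C ⊗[F] H) := by
  apply TensorProduct.ext'
  intro u h
  have r : Coalgebra.Repr F u (C × C) := ℛ F u
  simp only [LinearMap.comp_apply, LinearMap.rTensor_tmul, ← r.eq, TensorProduct.sum_tmul,
    map_sum, LinearEquiv.coe_coe, TensorProduct.assoc_tmul, LinearMap.lTensor_tmul,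
    TensorProduct.lid_tmul, LinearMap.id_apply]
  have := sum_smul_counit (F := F) (φ := (TensorProduct.mk F C H).flip h) r
  simpa [TensorProduct.tmul_smul, TensorProduct.mk_apply] using this

lemma inv_tmul (act : C →ₗ[F] H →ₗ[F] C) (inv : C ⊗[F] C →ₗ[F] C ⊗[F] H)
    (hinv₁ : canMap act ∘ₗ inv = LinearMap.id)
    (hinv₂ : inv ∘ₗ canMap act = LinearMap.id)
    (x y : C) {ι : Type*} (r : Coalgebra.Repr F x ι) :
    inv (x ⊗ₜ[F] y) = ∑ i ∈ r.index, r.left i ⊗ₜ[F] cotr inv (r.right i ⊗ₜ[F] y) := by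
  set w := inv (x ⊗ₜ[F] y) with hw
  have hcw : canMap act w = x ⊗ₜ[F] y := by
    rw [hw, ← LinearMap.comp_apply, hinv₁, LinearMap.id_apply]
  have colin := LinearMap.congr_fun (can_colinear act) w
  rw [LinearMap.comp_apply, LinearMap.comp_apply, hcw] at colin
  -- colin : assoc (rTensor comul (x ⊗ y)) = lTensor can (assoc (rTensor comul w))
  have colin2 : (LinearMap.lTensor C (canMap act))
      ((TensorProduct.assoc F C C H).toLinearMap
        ((LinearMap.rTensor H (comul (R := F))) w))
      = ∑ i ∈ r.index, r.left i ⊗ₜ[F] (r.right i ⊗ₜ[F] y) := by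
    rw [LinearMap.comp_apply, LinearMap.comp_apply] at colin
    rw [← colin]
    simp only [LinearMap.rTensor_tmul, ← r.eq, TensorProduct.sum_tmul, map_sum,
      LinearEquiv.coe_coe, TensorProduct.assoc_tmul]
  have step : (TensorProduct.assoc F C C H).toLinearMap
      ((LinearMap.rTensor H (comul (R := F))) w)
      = ∑ i ∈ r.index, r.left i ⊗ₜ[F] inv (r.right i ⊗ₜ[F] y) := by
    have := congrArg (LinearMap.lTensor C inv) colin2
    rwa [← LinearMap.comp_apply, ← LinearMap.lTensor_comp, hinv₂, LinearMap.lTensor_id,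
      LinearMap.id_apply, map_sum] at this
    
  calc w = ((LinearMap.lTensor C ((TensorProduct.lid F H).toLinearMap ∘ₗ
        (LinearMap.rTensor H (counit (R := F))))) ∘ₗ
        (TensorProduct.assoc F C C H).toLinearMap ∘ₗ
          (LinearMap.rTensor H (comul (R := F)))) w := by
        rw [strip_BH]; rfl
    _ = (LinearMap.lTensor C ((TensorProduct.lid F H).toLinearMap ∘ₗ
        (LinearMap.rTensor H (counit (R := F)))))
          (∑ i ∈ r.index, r.left i ⊗ₜ[F] inv (r.right i ⊗ₜ[F] y)) := by
        rw [LinearMap.comp_apply, LinearMap.comp_apply, step]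
    _ = ∑ i ∈ r.index, r.left i ⊗ₜ[F] cotr inv (r.right i ⊗ₜ[F] y) := by
        simp [map_sum, cotr]

lemma B_elt (act : C →ₗ[F] H →ₗ[F] C) (inv : C ⊗[F] C →ₗ[F] C ⊗[F] H)
    (hinv₁ : canMap act ∘ₗ inv = LinearMap.id)
    (hinv₂ : inv ∘ₗ canMap act = LinearMap.id)
    (x y : C) {ι : Type*} (r : Coalgebra.Repr F x ι) :
    ∑ i ∈ r.index, act (r.left i) (cotr inv (r.right i ⊗ₜ[F] y))
      = counit (R := F) x • y := by
  have r1 : ∀ i : r.ι, Coalgebra.Repr F (r.left i) (C × C) := fun i => ℛ F (r.left i)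
  have hc : canMap act (inv (x ⊗ₜ[F] y)) = x ⊗ₜ[F] y := by
    rw [← LinearMap.comp_apply, hinv₁, LinearMap.id_apply]
  rw [inv_tmul act inv hinv₁ hinv₂ x y r, map_sum] at hc
  have hc2 : ∑ i ∈ r.index, ∑ j ∈ (r1 i).index,
      (r1 i).left j ⊗ₜ[F] act ((r1 i).right j) (cotr inv (r.right i ⊗ₜ[F] y))
      = x ⊗ₜ[F] y := by
    rw [← hc]
    exact Finset.sum_congr rfl fun i _ => (can_tmul act _ _ (r1 i)).symm
  have := congrArg ((TensorProduct.lid F C).toLinearMap ∘ₗ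
    LinearMap.rTensor C (counit (R := F))) hc2
  simp only [map_sum, LinearMap.comp_apply, LinearMap.rTensor_tmul,
    LinearEquiv.coe_coe, TensorProduct.lid_tmul] at this
  rw [← this]
  refine Finset.sum_congr rfl fun i _ => ?_
  have := sum_counit_smul (F := F)
    (φ := act.flip (cotr inv (r.right i ⊗ₜ[F] y))) (r1 i)
  simpa using this.symm

end galois

section galois2
variable {C : Type v} {H : Type w} [AddCommGroup C] [Module F C] [Coalgebra F C]
  [Ring H] [HopfAlgebra F H]

lemma D_elt (act : C →ₗ[F] H →ₗ[F] C)
    (hact_mul : ∀ (c : C) (h k : H), act (act c h) k = act c (h * k))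
    (inv : C ⊗[F] C →ₗ[F] C ⊗[F] H)
    (hinv₁ : canMap act ∘ₗ inv = LinearMap.id)
    (hinv₂ : inv ∘ₗ canMap act = LinearMap.id)
    (x y : C) (h : H) :
    cotr inv (x ⊗ₜ[F] act y h) = cotr inv (x ⊗ₜ[F] y) * h := by
  have r : Coalgebra.Repr F x (C × C) := ℛ F x
  have r1 : ∀ i : r.ι, Coalgebra.Repr F (r.left i) (C × C) := fun i => ℛ F (r.left i)
  have key : canMap act (∑ i ∈ r.index,
      r.left i ⊗ₜ[F] (cotr inv (r.right i ⊗ₜ[F] y) * h)) = x ⊗ₜ[F] act y h := by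
    have lhs : canMap act (∑ i ∈ r.index,
        r.left i ⊗ₜ[F] (cotr inv (r.right i ⊗ₜ[F] y) * h))
        = (LinearMap.lTensor C (act.flip h))
            (canMap act (∑ i ∈ r.index,
              r.left i ⊗ₜ[F] cotr inv (r.right i ⊗ₜ[F] y))) := by
      rw [map_sum, map_sum, map_sum]
      refine Finset.sum_congr rfl fun i _ => ?_
      rw [can_tmul act _ _ (r1 i), can_tmul act _ _ (r1 i), map_sum]
      refine Finset.sum_congr rfl fun j _ => ?_
      simp [hact_mul]
    rw [lhs, ← inv_tmul act inv hinv₁ hinv₂ x y r, ← LinearMap.comp_apply (canMap act),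
      hinv₁, LinearMap.id_apply]
    simp
  have hinvkey : inv (x ⊗ₜ[F] act y h) = ∑ i ∈ r.index,
      r.left i ⊗ₜ[F] (cotr inv (r.right i ⊗ₜ[F] y) * h) := by
    rw [← key, ← LinearMap.comp_apply, hinv₂, LinearMap.id_apply]
  rw [show cotr inv (x ⊗ₜ[F] act y h) = ((TensorProduct.lid F H).toLinearMap ∘ₗ
      (LinearMap.rTensor H (counit (R := F)))) (inv (x ⊗ₜ[F] act y h)) from rfl, hinvkey]
  simp only [map_sum, LinearMap.comp_apply, LinearMap.rTensor_tmul, LinearEquiv.coe_coe,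
    TensorProduct.lid_tmul]
  simp only [← smul_mul_assoc, ← Finset.sum_mul]
  congr 1
  have := sum_counit_smul (F := F)
    (φ := cotr inv ∘ₗ (TensorProduct.mk F C C).flip y) r
  simpa using this

lemma counit_cotr (act : C →ₗ[F] H →ₗ[F] C)
    (hact_counit : ∀ (c : C) (h : H),
      counit (R := F) (act c h) = counit (R := F) c * counit (R := F) h)
    (inv : C ⊗[F] C →ₗ[F] C ⊗[F] H)
    (hinv₁ : canMap act ∘ₗ inv = LinearMap.id)
    (hinv₂ : inv ∘ₗ canMap act = LinearMap.id)
    (x y : C) :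
    counit (R := F) (cotr inv (x ⊗ₜ[F] y)) = counit (R := F) x * counit (R := F) y := by
  have r : Coalgebra.Repr F x (C × C) := ℛ F x
  have hB := congrArg (counit (R := F)) (B_elt act inv hinv₁ hinv₂ x y r)
  rw [map_sum, map_smul] at hB
  have lhs : ∑ i ∈ r.index, counit (R := F) (act (r.left i) (cotr inv (r.right i ⊗ₜ[F] y)))
      = counit (R := F) (cotr inv (x ⊗ₜ[F] y)) := by
    rw [show counit (R := F) (cotr inv (x ⊗ₜ[F] y))
        = (counit ∘ₗ cotr inv ∘ₗ (TensorProduct.mk F C C).flip y) x from rfl,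
      ← sum_counit_smul (F := F)
        (φ := counit ∘ₗ cotr inv ∘ₗ (TensorProduct.mk F C C).flip y) r]
    refine Finset.sum_congr rfl fun i _ => ?_
    simp [hact_counit, smul_eq_mul]
  rw [lhs] at hB
  rw [hB]
  simp [smul_eq_mul]

lemma E_elt (act : C →ₗ[F] H →ₗ[F] C)
    (hact_mul : ∀ (c : C) (h k : H), act (act c h) k = act c (h * k))
    (inv : C ⊗[F] C →ₗ[F] C ⊗[F] H)
    (hinv₁ : canMap act ∘ₗ inv = LinearMap.id)
    (hinv₂ : inv ∘ₗ canMap act = LinearMap.id)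
    (x z : C) {y : C} {ι : Type*} (r : Coalgebra.Repr F y ι) :
    ∑ i ∈ r.index, cotr inv (x ⊗ₜ[F] r.left i) * cotr inv (r.right i ⊗ₜ[F] z)
      = counit (R := F) y • cotr inv (x ⊗ₜ[F] z) := by
  have hB := B_elt act inv hinv₁ hinv₂ y z r
  have := congrArg (fun t => cotr inv (x ⊗ₜ[F] t)) hB
  simp only [TensorProduct.tmul_sum, map_sum, TensorProduct.tmul_smul, map_smul] at this
  rw [← this]
  exact Finset.sum_congr rfl fun i _ =>
    (D_elt act hact_mul inv hinv₁ hinv₂ x (r.left i) _).symm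

/-- `J : C ⊗ (H ⊗ H) → C ⊗ (C ⊗ C)`, `c ⊗ h ⊗ k ↦ Σ c₁ ⊗ c₂·h ⊗ c₃·k`. -/
noncomputable def Jmap (act : C →ₗ[F] H →ₗ[F] C) :
    C ⊗[F] (H ⊗[F] H) →ₗ[F] C ⊗[F] (C ⊗[F] C) :=
  (TensorProduct.assoc F C C C).toLinearMap ∘ₗ
  (LinearMap.rTensor C (canMap act)) ∘ₗ
  (TensorProduct.assoc F C H C).symm.toLinearMap ∘ₗ
  (LinearMap.lTensor C (TensorProduct.comm F C H).toLinearMap) ∘ₗ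
  (TensorProduct.assoc F C C H).toLinearMap ∘ₗ
  (LinearMap.rTensor H (canMap act)) ∘ₗ
  (TensorProduct.assoc F C H H).symm.toLinearMap ∘ₗ
  (LinearMap.lTensor C (TensorProduct.comm F H H).toLinearMap)

/-- left inverse of `J`. -/
noncomputable def Lmap (inv : C ⊗[F] C →ₗ[F] C ⊗[F] H) :
    C ⊗[F] (C ⊗[F] C) →ₗ[F] C ⊗[F] (H ⊗[F] H) :=
  (LinearMap.lTensor C (TensorProduct.comm F H H).toLinearMap) ∘ₗ
  (TensorProduct.assoc F C H H).toLinearMap ∘ₗ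
  (LinearMap.rTensor H inv) ∘ₗ
  (TensorProduct.assoc F C C H).symm.toLinearMap ∘ₗ
  (LinearMap.lTensor C (TensorProduct.comm F H C).toLinearMap) ∘ₗ
  (TensorProduct.assoc F C H C).toLinearMap ∘ₗ
  (LinearMap.rTensor C inv) ∘ₗ
  (TensorProduct.assoc F C C C).symm.toLinearMap

/-- the mirror composite computing `x ⊗ y ↦ Σ x₁ ⊗ τ(x₃ ⊗ y₁) ⊗ τ(x₂ ⊗ y₂)`. -/
noncomputable def t2map (inv : C ⊗[F] C →ₗ[F] C ⊗[F] H) :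
    C ⊗[F] C →ₗ[F] C ⊗[F] (H ⊗[F] H) :=
  (LinearMap.lTensor C (TensorProduct.comm F H H).toLinearMap) ∘ₗ
  (TensorProduct.assoc F C H H).toLinearMap ∘ₗ
  (LinearMap.rTensor H inv) ∘ₗ
  (TensorProduct.assoc F C C H).symm.toLinearMap ∘ₗ
  (LinearMap.lTensor C (TensorProduct.comm F H C).toLinearMap) ∘ₗ
  (TensorProduct.assoc F C H C).toLinearMap ∘ₗ
  (LinearMap.rTensor C inv) ∘ₗ
  (TensorProduct.assoc F C C C).symm.toLinearMap ∘ₗ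
  (LinearMap.lTensor C (comul (R := F)))

section Jfacts
variable (act : C →ₗ[F] H →ₗ[F] C) (inv : C ⊗[F] C →ₗ[F] C ⊗[F] H)

lemma lT_comm_comm {M N : Type*} [AddCommGroup M] [AddCommGroup N] [Module F M] [Module F N] :
    (LinearMap.lTensor C (TensorProduct.comm F M N).toLinearMap) ∘ₗ
      (LinearMap.lTensor C (TensorProduct.comm F N M).toLinearMap)
    = LinearMap.id := by
  rw [← LinearMap.lTensor_comp]
  convert LinearMap.lTensor_id C (N ⊗[F] M)
  apply TensorProduct.ext'; intro a b; simp

lemma assoc_symm_assoc {M N P : Type*} [AddCommGroup M] [AddCommGroup N] [AddCommGroup P]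
    [Module F M] [Module F N] [Module F P] :
    (TensorProduct.assoc F M N P).symm.toLinearMap ∘ₗ
      (TensorProduct.assoc F M N P).toLinearMap = LinearMap.id := by
  ext x; simp

lemma assoc_assoc_symm {M N P : Type*} [AddCommGroup M] [AddCommGroup N] [AddCommGroup P]
    [Module F M] [Module F N] [Module F P] :
    (TensorProduct.assoc F M N P).toLinearMap ∘ₗ
      (TensorProduct.assoc F M N P).symm.toLinearMap = LinearMap.id := by
  ext x; simp

lemma J_comp_t2 (hinv₁ : canMap act ∘ₗ inv = LinearMap.id) :
    Jmap act ∘ₗ t2map inv = LinearMap.lTensor C (comul (R := F)) := by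
  have hr1 : (LinearMap.rTensor H (canMap act)) ∘ₗ (LinearMap.rTensor H inv)
      = LinearMap.id := by
    rw [← LinearMap.rTensor_comp, hinv₁, LinearMap.rTensor_id]
  have hr2 : (LinearMap.rTensor C (canMap act)) ∘ₗ (LinearMap.rTensor C inv)
      = LinearMap.id := by
    rw [← LinearMap.rTensor_comp, hinv₁, LinearMap.rTensor_id]
  unfold Jmap t2map
  simp only [LinearMap.comp_assoc]
  rw [cancel_comp (F := F) (lT_comm_comm (M := H) (N := H)),
    cancel_comp (F := F) (assoc_symm_assoc (M := C) (N := H) (P := H)),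
    cancel_comp (F := F) hr1,
    cancel_comp (F := F) (assoc_assoc_symm (M := C) (N := C) (P := H)),
    cancel_comp (F := F) (lT_comm_comm (M := C) (N := H)),
    cancel_comp (F := F) (assoc_symm_assoc (M := C) (N := H) (P := C)),
    cancel_comp (F := F) hr2,
    cancel_comp (F := F) (assoc_assoc_symm (M := C) (N := C) (P := C))]

lemma L_comp_J (hinv₂ : inv ∘ₗ canMap act = LinearMap.id) :
    Lmap inv ∘ₗ Jmap act = LinearMap.id := by
  have hr1 : (LinearMap.rTensor H inv) ∘ₗ (LinearMap.rTensor H (canMap act))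
      = LinearMap.id := by
    rw [← LinearMap.rTensor_comp, hinv₂, LinearMap.rTensor_id]
  have hr2 : (LinearMap.rTensor C inv) ∘ₗ (LinearMap.rTensor C (canMap act))
      = LinearMap.id := by
    rw [← LinearMap.rTensor_comp, hinv₂, LinearMap.rTensor_id]
  unfold Jmap Lmap
  simp only [LinearMap.comp_assoc]
  rw [cancel_comp (F := F) (assoc_symm_assoc (M := C) (N := C) (P := C)),
    cancel_comp (F := F) hr2,
    cancel_comp (F := F) (assoc_assoc_symm (M := C) (N := H) (P := C)),
    cancel_comp (F := F) (lT_comm_comm (M := H) (N := C)),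
    cancel_comp (F := F) (assoc_symm_assoc (M := C) (N := C) (P := H)),
    cancel_comp (F := F) hr1,
    cancel_comp (F := F) (assoc_assoc_symm (M := C) (N := H) (P := H))]
  exact lT_comm_comm (M := H) (N := H)

lemma J_tmul (c : C) (h k : H) {ι : Type*} (r : Coalgebra.Repr F c ι)
    {κ : ι → Type*} (r1 : ∀ i : r.ι, Coalgebra.Repr F (r.left i) (κ i)) :
    Jmap act (c ⊗ₜ[F] (h ⊗ₜ[F] k)) = ∑ i ∈ r.index, ∑ j ∈ (r1 i).index,
      (r1 i).left j ⊗ₜ[F] (act ((r1 i).right j) h ⊗ₜ[F] act (r.right i) k) := by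
  unfold Jmap
  simp only [LinearMap.comp_apply, LinearMap.lTensor_tmul, LinearEquiv.coe_coe,
    TensorProduct.comm_tmul, TensorProduct.assoc_symm_tmul, LinearMap.rTensor_tmul]
  rw [can_tmul act c k r]
  simp only [TensorProduct.sum_tmul, map_sum, LinearEquiv.coe_coe, TensorProduct.assoc_tmul,
    LinearMap.lTensor_tmul, TensorProduct.comm_tmul, TensorProduct.assoc_symm_tmul,
    LinearMap.rTensor_tmul]
  refine Finset.sum_congr rfl fun i _ => ?_
  rw [can_tmul act (r.left i) h (r1 i)]
  simp only [TensorProduct.sum_tmul, map_sum, LinearEquiv.coe_coe, TensorProduct.assoc_tmul]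

lemma relJ
    (hact_comul : ∀ (c : C) (h : H) (ι : Type v) (rc : Coalgebra.Repr F c ι)
      (ι' : Type w) (rh : Coalgebra.Repr F h ι'),
      comul (R := F) (act c h) = ∑ i ∈ rc.index, ∑ j ∈ rh.index,
        act (rc.left i) (rh.left j) ⊗ₜ[F] act (rc.right i) (rh.right j)) :
    Jmap act ∘ₗ LinearMap.lTensor C (comul (R := F) (A := H))
      = LinearMap.lTensor C (comul (R := F) (A := C)) ∘ₗ canMap act := by
  apply TensorProduct.ext'
  intro c h
  have r : Coalgebra.Repr F c (C × C) := ℛ F c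
  have r1 : ∀ i : r.ι, Coalgebra.Repr F (r.left i) (C × C) := fun i => ℛ F (r.left i)
  have r2 : ∀ i : r.ι, Coalgebra.Repr F (r.right i) (C × C) := fun i => ℛ F (r.right i)
  have rh : Coalgebra.Repr F h (H × H) := ℛ F h
  have lhs : (Jmap act ∘ₗ LinearMap.lTensor C (comul (R := F) (A := H))) (c ⊗ₜ[F] h)
      = ∑ m ∈ rh.index, ∑ i ∈ r.index, ∑ j ∈ (r1 i).index,
        (r1 i).left j ⊗ₜ[F]
          (act ((r1 i).right j) (rh.left m) ⊗ₜ[F] act (r.right i) (rh.right m)) := by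
    rw [LinearMap.comp_apply, LinearMap.lTensor_tmul, ← rh.eq, TensorProduct.tmul_sum,
      map_sum]
    exact Finset.sum_congr rfl fun m _ => J_tmul act c (rh.left m) (rh.right m) r r1
  have rhs : (LinearMap.lTensor C (comul (R := F) (A := C)) ∘ₗ canMap act) (c ⊗ₜ[F] h)
      = ∑ m ∈ rh.index, ∑ i ∈ r.index, ∑ j ∈ (r2 i).index,
        r.left i ⊗ₜ[F]
          (act ((r2 i).left j) (rh.left m) ⊗ₜ[F] act ((r2 i).right j) (rh.right m)) := by
    rw [LinearMap.comp_apply, can_tmul act c h r, map_sum]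
    have : ∀ i ∈ r.index, LinearMap.lTensor C (comul (R := F) (A := C))
        (r.left i ⊗ₜ[F] act (r.right i) h)
        = ∑ j ∈ (r2 i).index, ∑ m ∈ rh.index,
          r.left i ⊗ₜ[F]
            (act ((r2 i).left j) (rh.left m) ⊗ₜ[F] act ((r2 i).right j) (rh.right m)) := by
      intro i _
      rw [LinearMap.lTensor_tmul, hact_comul _ _ _ (r2 i) _ rh]
      simp only [TensorProduct.tmul_sum]
    rw [Finset.sum_congr rfl this]
    rw [Finset.sum_comm]
    exact Finset.sum_congr rfl fun m _ => Finset.sum_comm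
  rw [lhs, rhs]
  refine Finset.sum_congr rfl fun m _ => ?_
  have := Coalgebra.sum_map_tmul_tmul_eq (R := F)
    (f := (LinearMap.id : C →ₗ[F] C)) (g := act.flip (rh.left m))
    (h := act.flip (rh.right m)) (a := c) (repr := r) (a₁ := r1) (a₂ := r2)
  simpa using this.symm

lemma t1_eq_t2
    (hact_comul : ∀ (c : C) (h : H) (ι : Type v) (rc : Coalgebra.Repr F c ι)
      (ι' : Type w) (rh : Coalgebra.Repr F h ι'),
      comul (R := F) (act c h) = ∑ i ∈ rc.index, ∑ j ∈ rh.index,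
        act (rc.left i) (rh.left j) ⊗ₜ[F] act (rc.right i) (rh.right j))
    (hinv₁ : canMap act ∘ₗ inv = LinearMap.id)
    (hinv₂ : inv ∘ₗ canMap act = LinearMap.id) :
    LinearMap.lTensor C (comul (R := F) (A := H)) ∘ₗ inv = t2map inv := by
  have h1 : Jmap act ∘ₗ (LinearMap.lTensor C (comul (R := F) (A := H)) ∘ₗ inv)
      = LinearMap.lTensor C (comul (R := F) (A := C)) := by
    rw [← LinearMap.comp_assoc, relJ act hact_comul, LinearMap.comp_assoc, hinv₁,
      LinearMap.comp_id]
  have h2 := J_comp_t2 act inv hinv₁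
  calc LinearMap.lTensor C (comul (R := F) (A := H)) ∘ₗ inv
      = (Lmap inv ∘ₗ Jmap act) ∘ₗ
          (LinearMap.lTensor C (comul (R := F) (A := H)) ∘ₗ inv) := by
        rw [L_comp_J act inv hinv₂, LinearMap.id_comp]
    _ = Lmap inv ∘ₗ LinearMap.lTensor C (comul (R := F) (A := C)) := by
        rw [LinearMap.comp_assoc, h1]
    _ = (Lmap inv ∘ₗ Jmap act) ∘ₗ t2map inv := by
        rw [LinearMap.comp_assoc, h2]
    _ = t2map inv := by rw [L_comp_J act inv hinv₂, LinearMap.id_comp]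

lemma t2map_tmul (x y : C) {ι : Type*} (rx : Coalgebra.Repr F x ι)
    {κ : ι → Type*} (rx1 : ∀ i : rx.ι, Coalgebra.Repr F (rx.left i) (κ i))
    (hinv₁ : canMap act ∘ₗ inv = LinearMap.id)
    (hinv₂ : inv ∘ₗ canMap act = LinearMap.id)
    {ι' : Type*} (ry : Coalgebra.Repr F y ι') :
    t2map inv (x ⊗ₜ[F] y) = ∑ m ∈ ry.index, ∑ i ∈ rx.index, ∑ p ∈ (rx1 i).index,
      (rx1 i).left p ⊗ₜ[F]
        (cotr inv (rx.right i ⊗ₜ[F] ry.left m) ⊗ₜ[F]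
          cotr inv ((rx1 i).right p ⊗ₜ[F] ry.right m)) := by
  unfold t2map
  simp only [LinearMap.comp_apply, LinearMap.lTensor_tmul, ← ry.eq,
    TensorProduct.tmul_sum, map_sum]
  refine Finset.sum_congr rfl fun m _ => ?_
  simp only [LinearEquiv.coe_coe, TensorProduct.assoc_symm_tmul, LinearMap.rTensor_tmul]
  rw [inv_tmul act inv hinv₁ hinv₂ x (ry.left m) rx]
  simp only [TensorProduct.sum_tmul, map_sum, LinearEquiv.coe_coe, TensorProduct.assoc_tmul,
    LinearMap.lTensor_tmul, TensorProduct.comm_tmul, TensorProduct.assoc_symm_tmul,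
    LinearMap.rTensor_tmul]
  refine Finset.sum_congr rfl fun i _ => ?_
  rw [inv_tmul act inv hinv₁ hinv₂ (rx.left i) (ry.right m) (rx1 i)]
  simp only [TensorProduct.sum_tmul, map_sum, LinearEquiv.coe_coe, TensorProduct.assoc_tmul,
    LinearMap.lTensor_tmul, TensorProduct.comm_tmul]

lemma comul_cotr
    (hact_comul : ∀ (c : C) (h : H) (ι : Type v) (rc : Coalgebra.Repr F c ι)
      (ι' : Type w) (rh : Coalgebra.Repr F h ι'),
      comul (R := F) (act c h) = ∑ i ∈ rc.index, ∑ j ∈ rh.index,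
        act (rc.left i) (rh.left j) ⊗ₜ[F] act (rc.right i) (rh.right j))
    (hinv₁ : canMap act ∘ₗ inv = LinearMap.id)
    (hinv₂ : inv ∘ₗ canMap act = LinearMap.id)
    (x y : C) {ι ι' : Type*} (rx : Coalgebra.Repr F x ι) (ry : Coalgebra.Repr F y ι') :
    comul (R := F) (cotr inv (x ⊗ₜ[F] y))
      = ∑ i ∈ rx.index, ∑ m ∈ ry.index,
        cotr inv (rx.right i ⊗ₜ[F] ry.left m) ⊗ₜ[F] cotr inv (rx.left i ⊗ₜ[F] ry.right m) := by
  have rx1 : ∀ i : rx.ι, Coalgebra.Repr F (rx.left i) (C × C) := fun i => ℛ F (rx.left i)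
  have key := LinearMap.congr_fun (t1_eq_t2 act inv hact_comul hinv₁ hinv₂) (x ⊗ₜ[F] y)
  rw [LinearMap.comp_apply] at key
  have strip := (TensorProduct.lid F (H ⊗[F] H)).toLinearMap ∘ₗ
    LinearMap.rTensor (H ⊗[F] H) (counit (R := F) (A := C))
  have keyS := congrArg ((TensorProduct.lid F (H ⊗[F] H)).toLinearMap ∘ₗ
    LinearMap.rTensor (H ⊗[F] H) (counit (R := F) (A := C))) key
  have lhsv : ((TensorProduct.lid F (H ⊗[F] H)).toLinearMap ∘ₗ
      LinearMap.rTensor (H ⊗[F] H) (counit (R := F) (A := C)))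
        (LinearMap.lTensor C (comul (R := F) (A := H)) (inv (x ⊗ₜ[F] y)))
      = comul (R := F) (cotr inv (x ⊗ₜ[F] y)) := by
    rw [inv_tmul act inv hinv₁ hinv₂ x y rx]
    simp only [map_sum, LinearMap.lTensor_tmul, LinearMap.comp_apply,
      LinearMap.rTensor_tmul, LinearEquiv.coe_coe, TensorProduct.lid_tmul]
    have := sum_counit_smul (F := F)
      (φ := (comul (R := F) (A := H)) ∘ₗ cotr inv ∘ₗ (TensorProduct.mk F C C).flip y) rx
    simpa using this
  have rhsv : ((TensorProduct.lid F (H ⊗[F] H)).toLinearMap ∘ₗ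
      LinearMap.rTensor (H ⊗[F] H) (counit (R := F) (A := C)))
        (t2map inv (x ⊗ₜ[F] y))
      = ∑ m ∈ ry.index, ∑ i ∈ rx.index,
        cotr inv (rx.right i ⊗ₜ[F] ry.left m) ⊗ₜ[F] cotr inv (rx.left i ⊗ₜ[F] ry.right m) := by
    rw [t2map_tmul act inv x y rx rx1 hinv₁ hinv₂ ry]
    simp only [map_sum, LinearMap.comp_apply, LinearMap.rTensor_tmul, LinearEquiv.coe_coe,
      TensorProduct.lid_tmul]
    refine Finset.sum_congr rfl fun m _ => Finset.sum_congr rfl fun i _ => ?_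
    have := sum_counit_smul (F := F)
      (φ := (TensorProduct.mk F H H (cotr inv (rx.right i ⊗ₜ[F] ry.left m))) ∘ₗ
        cotr inv ∘ₗ (TensorProduct.mk F C C).flip (ry.right m)) (rx1 i)
    simpa using this
  rw [← lhsv, keyS, rhsv]
  exact Finset.sum_comm

lemma Opp_elt
    (hact_comul : ∀ (c : C) (h : H) (ι : Type v) (rc : Coalgebra.Repr F c ι)
      (ι' : Type w) (rh : Coalgebra.Repr F h ι'),
      comul (R := F) (act c h) = ∑ i ∈ rc.index, ∑ j ∈ rh.index,
        act (rc.left i) (rh.left j) ⊗ₜ[F] act (rc.right i) (rh.right j))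
    (hact_counit : ∀ (c : C) (h : H),
      counit (R := F) (act c h) = counit (R := F) c * counit (R := F) h)
    (hinv₁ : canMap act ∘ₗ inv = LinearMap.id)
    (hinv₂ : inv ∘ₗ canMap act = LinearMap.id)
    (x y : C) {ι ι' : Type*} (rx : Coalgebra.Repr F x ι) (ry : Coalgebra.Repr F y ι') :
    ∑ i ∈ rx.index, ∑ m ∈ ry.index,
      cotr inv (rx.right i ⊗ₜ[F] ry.left m) *
        HopfAlgebra.antipode (R := F) (cotr inv (rx.left i ⊗ₜ[F] ry.right m))
    = (counit (R := F) x * counit (R := F) y) • (1 : H) := by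
  have hc := comul_cotr act inv hact_comul hinv₁ hinv₂ x y rx ry
  have happ := congrArg (LinearMap.mul' F H ∘ₗ
    LinearMap.lTensor H (HopfAlgebra.antipode (R := F) (A := H))) hc
  have lhs : (LinearMap.mul' F H ∘ₗ
      LinearMap.lTensor H (HopfAlgebra.antipode (R := F) (A := H)))
        (comul (R := F) (cotr inv (x ⊗ₜ[F] y)))
      = (counit (R := F) x * counit (R := F) y) • (1 : H) := by
    rw [LinearMap.comp_apply,
      HopfAlgebra.mul_antipode_lTensor_comul_apply (cotr inv (x ⊗ₜ[F] y)),
      counit_cotr act hact_counit inv hinv₁ hinv₂ x y, Algebra.algebraMap_eq_smul_one]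
  rw [lhs] at happ
  rw [happ]
  simp [map_sum]

/-- the map `u ↦ Σ S (τ (u₂ ⊗ u₁))`. -/
noncomputable def ghat (inv : C ⊗[F] C →ₗ[F] C ⊗[F] H) : C →ₗ[F] H :=
  HopfAlgebra.antipode (R := F) ∘ₗ cotr inv ∘ₗ (TensorProduct.comm F C C).toLinearMap ∘ₗ
    (comul (R := F))

lemma ghat_eq (u : C) {ι : Type*} (r : Coalgebra.Repr F u ι) :
    ghat inv u = ∑ j ∈ r.index,
      HopfAlgebra.antipode (R := F) (cotr inv (r.right j ⊗ₜ[F] r.left j)) := by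
  unfold ghat
  simp [LinearMap.comp_apply, ← r.eq, map_sum]

lemma K1
    (hact_mul : ∀ (c : C) (h k : H), act (act c h) k = act c (h * k))
    (hinv₁ : canMap act ∘ₗ inv = LinearMap.id)
    (hinv₂ : inv ∘ₗ canMap act = LinearMap.id)
    (x y : C) {ι ι' : Type*} (rx : Coalgebra.Repr F x ι) (ry : Coalgebra.Repr F y ι') :
    ∑ j ∈ rx.index, ∑ q ∈ ry.index,
      HopfAlgebra.antipode (R := F) (cotr inv (ry.right q ⊗ₜ[F] rx.left j)) *
        HopfAlgebra.antipode (R := F) (cotr inv (rx.right j ⊗ₜ[F] ry.left q))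
    = counit (R := F) y • ghat inv x := by
  have step : ∀ j ∈ rx.index,
      ∑ q ∈ ry.index,
        HopfAlgebra.antipode (R := F) (cotr inv (ry.right q ⊗ₜ[F] rx.left j)) *
          HopfAlgebra.antipode (R := F) (cotr inv (rx.right j ⊗ₜ[F] ry.left q))
      = counit (R := F) y •
          HopfAlgebra.antipode (R := F) (cotr inv (rx.right j ⊗ₜ[F] rx.left j)) := by
    intro j _
    have : ∀ q ∈ ry.index,
        HopfAlgebra.antipode (R := F) (cotr inv (ry.right q ⊗ₜ[F] rx.left j)) *
          HopfAlgebra.antipode (R := F) (cotr inv (rx.right j ⊗ₜ[F] ry.left q))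
        = HopfAlgebra.antipode (R := F) (cotr inv (rx.right j ⊗ₜ[F] ry.left q) *
            cotr inv (ry.right q ⊗ₜ[F] rx.left j)) := fun q _ =>
      (antipode_mul (F := F) _ _).symm
    rw [Finset.sum_congr rfl this, ← map_sum,
      E_elt act hact_mul inv hinv₁ hinv₂ (rx.right j) (rx.left j) ry, map_smul]
  rw [Finset.sum_congr rfl step, ← Finset.smul_sum, ghat_eq inv x rx]

lemma main_elt
    (hact_mul : ∀ (c : C) (h k : H), act (act c h) k = act c (h * k))
    (hact_comul : ∀ (c : C) (h : H) (ι : Type v) (rc : Coalgebra.Repr F c ι)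
      (ι' : Type w) (rh : Coalgebra.Repr F h ι'),
      comul (R := F) (act c h) = ∑ i ∈ rc.index, ∑ j ∈ rh.index,
        act (rc.left i) (rh.left j) ⊗ₜ[F] act (rc.right i) (rh.right j))
    (hact_counit : ∀ (c : C) (h : H),
      counit (R := F) (act c h) = counit (R := F) c * counit (R := F) h)
    (hinv₁ : canMap act ∘ₗ inv = LinearMap.id)
    (hinv₂ : inv ∘ₗ canMap act = LinearMap.id)
    (b c : C) {ι : Type*} (rc : Coalgebra.Repr F c ι)
    {κ : ι → Type*} (rcc : ∀ j : rc.ι, Coalgebra.Repr F (rc.right j) (κ j)) :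
    ∑ j ∈ rc.index, ∑ k ∈ (rcc j).index,
      cotr inv (b ⊗ₜ[F] rc.left j) *
        HopfAlgebra.antipode (R := F) (cotr inv ((rcc j).right k ⊗ₜ[F] (rcc j).left k))
    = HopfAlgebra.antipode (R := F) (cotr inv (c ⊗ₜ[F] b)) := by
  have rb : Coalgebra.Repr F b (C × C) := ℛ F b
  have rbl : ∀ m : rb.ι, Coalgebra.Repr F (rb.left m) (C × C) := fun m => ℛ F (rb.left m)
  have rb2 : ∀ m : rb.ι, Coalgebra.Repr F (rb.right m) (C × C) := fun m => ℛ F (rb.right m)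
  have rcl : ∀ j : rc.ι, Coalgebra.Repr F (rc.left j) (C × C) := fun j => ℛ F (rc.left j)
  have rc2 : ∀ j : rc.ι, Coalgebra.Repr F (rc.right j) (C × C) := fun j => ℛ F (rc.right j)
  calc
    ∑ j ∈ rc.index, ∑ k ∈ (rcc j).index,
      cotr inv (b ⊗ₜ[F] rc.left j) *
        HopfAlgebra.antipode (R := F) (cotr inv ((rcc j).right k ⊗ₜ[F] (rcc j).left k))
      = ∑ j ∈ rc.index, cotr inv (b ⊗ₜ[F] rc.left j) * ghat inv (rc.right j) := by
        refine Finset.sum_congr rfl fun j _ => ?_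
        rw [← Finset.mul_sum, ← ghat_eq inv (rc.right j) (rcc j)]
    _ = ∑ j ∈ rc.index, ∑ m ∈ rb.index,
          cotr inv (rb.right m ⊗ₜ[F] rc.left j) *
            (counit (R := F) (rb.left m) • ghat inv (rc.right j)) := by
        refine Finset.sum_congr rfl fun j _ => ?_
        have hb := sum_counit_smul (F := F)
          (φ := cotr inv ∘ₗ (TensorProduct.mk F C C).flip (rc.left j)) rb
        simp only [LinearMap.comp_apply, TensorProduct.mk_apply,
          LinearMap.flip_apply] at hb
        rw [← hb, Finset.sum_mul]
        exact Finset.sum_congr rfl fun m _ => by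
          rw [smul_mul_assoc, mul_smul_comm]
    _ = ∑ j ∈ rc.index, ∑ m ∈ rb.index, ∑ q ∈ (rc2 j).index, ∑ t ∈ (rbl m).index,
          cotr inv (rb.right m ⊗ₜ[F] rc.left j) *
            (HopfAlgebra.antipode (R := F)
                (cotr inv ((rbl m).right t ⊗ₜ[F] (rc2 j).left q)) *
              HopfAlgebra.antipode (R := F)
                (cotr inv ((rc2 j).right q ⊗ₜ[F] (rbl m).left t))) := by
        refine Finset.sum_congr rfl fun j _ => Finset.sum_congr rfl fun m _ => ?_
        rw [← K1 act inv hact_mul hinv₁ hinv₂ (rc.right j) (rb.left m) (rc2 j) (rbl m)]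
        rw [Finset.mul_sum]
        exact Finset.sum_congr rfl fun q _ => by rw [Finset.mul_sum]
    _ = ∑ j ∈ rc.index, ∑ q ∈ (rc2 j).index, ∑ m ∈ rb.index, ∑ t ∈ (rbl m).index,
          cotr inv (rb.right m ⊗ₜ[F] rc.left j) *
            (HopfAlgebra.antipode (R := F)
                (cotr inv ((rbl m).right t ⊗ₜ[F] (rc2 j).left q)) *
              HopfAlgebra.antipode (R := F)
                (cotr inv ((rc2 j).right q ⊗ₜ[F] (rbl m).left t))) :=
        Finset.sum_congr rfl fun j _ => Finset.sum_comm
    _ = ∑ j ∈ rc.index, ∑ q ∈ (rc2 j).index, ∑ m ∈ rb.index, ∑ t ∈ (rb2 m).index,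
          cotr inv ((rb2 m).right t ⊗ₜ[F] rc.left j) *
            (HopfAlgebra.antipode (R := F)
                (cotr inv ((rb2 m).left t ⊗ₜ[F] (rc2 j).left q)) *
              HopfAlgebra.antipode (R := F)
                (cotr inv ((rc2 j).right q ⊗ₜ[F] rb.left m))) := by
        refine Finset.sum_congr rfl fun j _ => Finset.sum_congr rfl fun q _ => ?_
        have := sum_repr_assoc (F := F)
          (Ψ := mul₃rev ∘ₗ TensorProduct.map
            (HopfAlgebra.antipode (R := F) ∘ₗ cotr inv ∘ₗ
              (TensorProduct.mk F C C ((rc2 j).right q)))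
            (TensorProduct.map
              (HopfAlgebra.antipode (R := F) ∘ₗ cotr inv ∘ₗ
                (TensorProduct.mk F C C).flip ((rc2 j).left q))
              (cotr inv ∘ₗ (TensorProduct.mk F C C).flip (rc.left j)))) rb rbl rb2
        simpa using this
    _ = ∑ m ∈ rb.index, ∑ t ∈ (rb2 m).index, ∑ j ∈ rc.index, ∑ q ∈ (rc2 j).index,
          cotr inv ((rb2 m).right t ⊗ₜ[F] rc.left j) *
            (HopfAlgebra.antipode (R := F)
                (cotr inv ((rb2 m).left t ⊗ₜ[F] (rc2 j).left q)) *
              HopfAlgebra.antipode (R := F)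
                (cotr inv ((rc2 j).right q ⊗ₜ[F] rb.left m))) :=
        sum_swap4 _ _ _ _ _
    _ = ∑ m ∈ rb.index, ∑ t ∈ (rb2 m).index, ∑ j ∈ rc.index, ∑ q ∈ (rcl j).index,
          cotr inv ((rb2 m).right t ⊗ₜ[F] (rcl j).left q) *
            (HopfAlgebra.antipode (R := F)
                (cotr inv ((rb2 m).left t ⊗ₜ[F] (rcl j).right q)) *
              HopfAlgebra.antipode (R := F)
                (cotr inv (rc.right j ⊗ₜ[F] rb.left m))) := by
        refine Finset.sum_congr rfl fun m _ => Finset.sum_congr rfl fun t _ => ?_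
        have := sum_repr_assoc (F := F)
          (Ψ := mul₃ ∘ₗ TensorProduct.map
            (cotr inv ∘ₗ (TensorProduct.mk F C C ((rb2 m).right t)))
            (TensorProduct.map
              (HopfAlgebra.antipode (R := F) ∘ₗ cotr inv ∘ₗ
                (TensorProduct.mk F C C ((rb2 m).left t)))
              (HopfAlgebra.antipode (R := F) ∘ₗ cotr inv ∘ₗ
                (TensorProduct.mk F C C).flip (rb.left m)))) rc rcl rc2
        simpa using this.symm
    _ = ∑ m ∈ rb.index, ∑ j ∈ rc.index, ∑ t ∈ (rb2 m).index, ∑ q ∈ (rcl j).index,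
          cotr inv ((rb2 m).right t ⊗ₜ[F] (rcl j).left q) *
            (HopfAlgebra.antipode (R := F)
                (cotr inv ((rb2 m).left t ⊗ₜ[F] (rcl j).right q)) *
              HopfAlgebra.antipode (R := F)
                (cotr inv (rc.right j ⊗ₜ[F] rb.left m))) :=
        Finset.sum_congr rfl fun m _ => Finset.sum_comm
    _ = ∑ m ∈ rb.index, ∑ j ∈ rc.index,
          (counit (R := F) (rb.right m) * counit (R := F) (rc.left j)) •
            HopfAlgebra.antipode (R := F) (cotr inv (rc.right j ⊗ₜ[F] rb.left m)) := by
        refine Finset.sum_congr rfl fun m _ => Finset.sum_congr rfl fun j _ => ?_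
        simp only [← mul_assoc]
        simp only [← Finset.sum_mul]
        rw [Opp_elt act inv hact_comul hact_counit hinv₁ hinv₂
          (rb.right m) (rc.left j) (rb2 m) (rcl j)]
        rw [smul_mul_assoc, one_mul]
    _ = HopfAlgebra.antipode (R := F) (cotr inv (c ⊗ₜ[F] b)) := by
        have inner : ∀ m ∈ rb.index,
            ∑ j ∈ rc.index, counit (R := F) (rc.left j) •
              HopfAlgebra.antipode (R := F) (cotr inv (rc.right j ⊗ₜ[F] rb.left m))
            = HopfAlgebra.antipode (R := F) (cotr inv (c ⊗ₜ[F] rb.left m)) := by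
          intro m _
          have := sum_counit_smul (F := F)
            (φ := HopfAlgebra.antipode (R := F) ∘ₗ cotr inv ∘ₗ
              (TensorProduct.mk F C C).flip (rb.left m)) rc
          simpa using this
        calc ∑ m ∈ rb.index, ∑ j ∈ rc.index,
              (counit (R := F) (rb.right m) * counit (R := F) (rc.left j)) •
                HopfAlgebra.antipode (R := F) (cotr inv (rc.right j ⊗ₜ[F] rb.left m))
            = ∑ m ∈ rb.index, counit (R := F) (rb.right m) •
                HopfAlgebra.antipode (R := F) (cotr inv (c ⊗ₜ[F] rb.left m)) := by
              refine Finset.sum_congr rfl fun m hm => ?_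
              rw [← inner m hm, Finset.smul_sum]
              exact Finset.sum_congr rfl fun j _ => by rw [mul_smul]
          _ = HopfAlgebra.antipode (R := F) (cotr inv (c ⊗ₜ[F] b)) := by
              have := sum_smul_counit (F := F)
                (φ := HopfAlgebra.antipode (R := F) ∘ₗ cotr inv ∘ₗ
                  (TensorProduct.mk F C C c)) rb
              simpa using this

end Jfacts

end galois2
end HGCaux

/-- `Σ τ(b⊗c₁) S(τ(c₃⊗c₂)) = S(τ(c⊗b))`. -/
theorem cotr_twist {F : Type u} {C : Type v} {H : Type w} [Field F]
    [AddCommGroup C] [Module F C] [Coalgebra F C] [Ring H] [HopfAlgebra F H]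
    (act : C →ₗ[F] H →ₗ[F] C)
    (hact_one : ∀ c : C, act c 1 = c)
    (hact_mul : ∀ (c : C) (h k : H), act (act c h) k = act c (h * k))
    (hact_comul : ∀ (c : C) (h : H) (ι : Type v) (rc : Coalgebra.Repr F c ι)
      (ι' : Type w) (rh : Coalgebra.Repr F h ι'),
      comul (R := F) (act c h) = ∑ i ∈ rc.index, ∑ j ∈ rh.index,
        act (rc.left i) (rh.left j) ⊗ₜ[F] act (rc.right i) (rh.right j))
    (hact_counit : ∀ (c : C) (h : H),
      counit (R := F) (act c h) = counit (R := F) c * counit (R := F) h)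
    (hker : LinearMap.ker (counit (R := F) : C →ₗ[F] F) =
      Submodule.span F {x : C | ∃ (c : C) (h : H), x = act c h - counit (R := F) h • c})
    (inv : C ⊗[F] C →ₗ[F] C ⊗[F] H)
    (hinv₁ : canMap act ∘ₗ inv = LinearMap.id)
    (hinv₂ : inv ∘ₗ canMap act = LinearMap.id)
    :
    ∀ (b c : C) (ι : Type v) (rc : Coalgebra.Repr F c ι)
      (κ : ι → Type v) (rcc : ∀ j, Coalgebra.Repr F (rc.right j) (κ j)),
      ∑ j ∈ rc.index, ∑ k ∈ (rcc j).index,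
        cotr inv (b ⊗ₜ[F] rc.left j) *
          HopfAlgebra.antipode (R := F) (cotr inv ((rcc j).right k ⊗ₜ[F] (rcc j).left k))
        = HopfAlgebra.antipode (R := F) (cotr inv (c ⊗ₜ[F] b)) := by
  
  intro b c ι rc κ rcc
  exact HGCaux.main_elt act inv hact_mul hact_comul hact_counit hinv₁ hinv₂ b c rc rcc
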